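/- arXiv:0809.4360 — 8 statements merged into one kernel-verified Lean document; each statement's English description precedes it below -/
import Mathlib

section
/- Let n be a positive integer and let c be an n×n complex matrix which is skew-Hermitian (star c = −c) and satisfies exp((2π)·c) = 1, where exp is the matrix exponential and 1 is the identity matrix. Then there exist a unitary n×n matrix a and integers s₁, …, sₙ such that (star a) * c * a is the diagonal matrix with diagonal entries i·s₁, …, i·sₙ. -/
open Matrix

theorem stmt_0 (n : ℕ) (hn : 1 ≤ n) (c : Matrix (Fin n) (Fin n) ℂ)
    (hskew : star c = -c)
    (hexp : NormedSpace.exp ((2 * Real.pi : ℝ) • c) = 1) :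
    ∃ (a : Matrix (Fin n) (Fin n) ℂ) (s : Fin n → ℤ),
      star a * a = 1 ∧
      star a * c * a = Matrix.diagonal (fun k => Complex.I * (s k : ℂ)) := by
  have hH : (Complex.I • c).IsHermitian := by
    rw [Matrix.IsHermitian, conjTranspose_smul]
    rw [show cᴴ = -c from hskew]
    simp [smul_smul]
  set U : Matrix (Fin n) (Fin n) ℂ := (hH.eigenvectorUnitary : Matrix (Fin n) (Fin n) ℂ) with hUdef
  have hU : star U * U = 1 := Matrix.mem_unitaryGroup_iff'.mp (hH.eigenvectorUnitary).2
  have hdiag : star U * (Complex.I • c) * U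
      = diagonal (RCLike.ofReal ∘ hH.eigenvalues) := by
    rw [← hH.conjStarAlgAut_star_eigenvectorUnitary, Unitary.conjStarAlgAut_apply]; simp [hUdef]
  have hdiag2 : star U * c * U
      = diagonal (fun k => -Complex.I * (hH.eigenvalues k : ℂ)) := by
    have h1 : Complex.I • (star U * c * U) = diagonal (RCLike.ofReal ∘ hH.eigenvalues) := by
      rw [← hdiag]; rw [mul_smul_comm, smul_mul_assoc]
    have := congrArg (fun M => (-Complex.I) • M) h1
    simp only [smul_smul] at this
    rw [show -Complex.I * Complex.I = 1 by simp, one_smul] at this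
    rw [this, ← Matrix.diagonal_smul]
    try congr 1
  have hUnit : IsUnit U := ⟨⟨U, star U, mul_eq_one_comm.mp hU, hU⟩, rfl⟩
  have hinv : U⁻¹ = star U := Matrix.inv_eq_left_inv hU
  -- conjugate the exponential
  have hconj : NormedSpace.exp (star U * ((2 * Real.pi : ℝ) • c) * U)
      = star U * NormedSpace.exp ((2 * Real.pi : ℝ) • c) * U := by
    rw [← hinv]
    exact Matrix.exp_conj' U _ hUnit
  rw [hexp, mul_one, hU] at hconj
  have hmid : star U * ((2 * Real.pi : ℝ) • c) * U
      = diagonal (fun k => ((2 * Real.pi : ℝ) : ℂ) • (-Complex.I * (hH.eigenvalues k : ℂ))) := by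
    rw [mul_smul_comm, smul_mul_assoc, hdiag2, ← Matrix.diagonal_smul]
    try congr 1
  rw [hmid, Matrix.exp_diagonal] at hconj
  have hent : ∀ k : Fin n, ∃ m : ℤ, (hH.eigenvalues k : ℝ) = -(m : ℝ) := by
    intro k
    have hk := congrFun (congrFun hconj k) k
    simp only [diagonal_apply_eq, Matrix.one_apply_eq] at hk
    rw [Pi.coe_exp, ← Complex.exp_eq_exp_ℂ] at hk
    rw [Complex.exp_eq_one_iff] at hk
    obtain ⟨m, hm⟩ := hk
    refine ⟨m, ?_⟩
    have hπ : (Real.pi : ℂ) ≠ 0 := by exact_mod_cast Real.pi_ne_zero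
    have : ((hH.eigenvalues k : ℝ) : ℂ) = -(m : ℂ) := by
      have h2 : ((2 * Real.pi : ℝ) : ℂ) • (-Complex.I * (hH.eigenvalues k : ℂ))
          = (m : ℂ) * (2 * Real.pi * Complex.I) := by exact_mod_cast hm
      rw [smul_eq_mul] at h2
      push_cast at h2 ⊢
      field_simp at h2
      have hI := Complex.I_ne_zero
      -- h2 : something; solve for eigenvalue
      apply mul_left_cancel₀ (mul_ne_zero (mul_ne_zero (two_ne_zero) hπ) hI)
      ring_nf
      ring_nf at h2
      linear_combination (-(2 * (Real.pi : ℂ) * Complex.I)) * h2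
    exact_mod_cast this
  choose s hs using hent
  refine ⟨U, s, hU, ?_⟩
  rw [hdiag2]
  exact congrArg diagonal (funext fun k => by rw [hs k]; push_cast; ring)
end

section
/- Let n ≥ 1, let A : ℝ → Matrix n n ℂ be any function, and let f : ℝ → Matrix n n ℂ be differentiable with deriv f t = f t * A t − A t * f t for all t ∈ ℝ. Then for every natural number m and every t ∈ ℝ, trace((f t)^m) = trace((f 0)^m). -/
attribute [local instance] Matrix.frobeniusNormedAddCommGroup Matrix.frobeniusNormedSpace

attribute [local instance] Matrix.frobeniusNormedRing Matrix.frobeniusNormedAlgebra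

theorem stmt_4 (n : ℕ) (hn : 1 ≤ n) (A : ℝ → Matrix (Fin n) (Fin n) ℂ)
    (f : ℝ → Matrix (Fin n) (Fin n) ℂ) (hf : Differentiable ℝ f)
    (hode : ∀ t : ℝ, deriv f t = f t * A t - A t * f t) :
    ∀ (m : ℕ) (t : ℝ), ((f t) ^ m).trace = ((f 0) ^ m).trace := by
  intro m
  -- derivative of f^m is the commutator [f^m, A]
  have hpow : ∀ t : ℝ, HasDerivAt (fun s => f s ^ m)
      (f t ^ m * A t - A t * f t ^ m) t := by
    intro t
    induction m with
    | zero =>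
      simp only [pow_zero, mul_one, one_mul, sub_self]
      exact hasDerivAt_const t (1 : Matrix (Fin n) (Fin n) ℂ)
    | succ k ih =>
      have hft : HasDerivAt f (f t * A t - A t * f t) t := by
        rw [← hode t]; exact (hf t).hasDerivAt
      have h := ih.mul hft
      have e1 : (fun s => f s ^ (k + 1)) = fun s => f s ^ k * f s := by
        funext s; rw [pow_succ]
      have e2 : (f t ^ k * A t - A t * f t ^ k) * f t + f t ^ k * (f t * A t - A t * f t)
          = f t ^ (k + 1) * A t - A t * f t ^ (k + 1) := by
        rw [pow_succ]; noncomm_ring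
      rw [e1, ← e2]
      exact h
  set T := (Matrix.traceLinearMap (Fin n) ℂ ℂ).toContinuousLinearMap with hT
  have htr : ∀ t : ℝ, HasDerivAt (fun s => (f s ^ m).trace) 0 t := by
    intro t
    have h2 : HasDerivAt (fun s => (f s ^ m).trace)
        ((f t ^ m * A t - A t * f t ^ m).trace) t :=
      (T.restrictScalars ℝ).hasFDerivAt.comp_hasDerivAt t (hpow t)
    have h0 : (f t ^ m * A t - A t * f t ^ m).trace = 0 := by
      rw [Matrix.trace_sub, Matrix.trace_mul_comm (f t ^ m) (A t), sub_self]
    rwa [h0] at h2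
  intro t
  have : (fun s => (f s ^ m).trace) t = (fun s => (f s ^ m).trace) 0 :=
    is_const_of_deriv_eq_zero (fun s => (htr s).differentiableAt)
      (fun s => (htr s).deriv) t 0
  simpa using this
end

section
/- Let n ≥ 1, let A : ℝ → Matrix n n ℂ be continuous, let f : ℝ → Matrix n n ℂ be differentiable with deriv f t = f t * A t − A t * f t for all t ∈ ℝ, and let ξ : ℝ → ℂⁿ be differentiable with deriv ξ t = −(A t).mulVec (ξ t) for all t ∈ ℝ. If λ ∈ ℂ satisfies (f 0).mulVec (ξ 0) = λ • ξ 0, then (f t).mulVec (ξ t) = λ • ξ t for all t ∈ ℝ. -/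
attribute [local instance] Matrix.frobeniusNormedAddCommGroup Matrix.frobeniusNormedSpace

set_option maxHeartbeats 1000000 in
theorem stmt_5 (n : ℕ) (hn : 1 ≤ n) (A : ℝ → Matrix (Fin n) (Fin n) ℂ)
    (hA : Continuous A)
    (f : ℝ → Matrix (Fin n) (Fin n) ℂ) (hf : Differentiable ℝ f)
    (hfode : ∀ t : ℝ, deriv f t = f t * A t - A t * f t)
    (ξ : ℝ → (Fin n → ℂ)) (hξ : Differentiable ℝ ξ)
    (hξode : ∀ t : ℝ, deriv ξ t = -((A t).mulVec (ξ t)))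
    (lam : ℂ) (h0 : (f 0).mulVec (ξ 0) = lam • ξ 0) :
    ∀ t : ℝ, (f t).mulVec (ξ t) = lam • ξ t := by
  classical
  -- mulVec as an ℝ-continuous-linear map in the matrix argument
  set mlinC : Matrix (Fin n) (Fin n) ℂ →ₗ[ℂ]
      ((Fin n → ℂ) →L[ℂ] (Fin n → ℂ)) :=
    (LinearMap.toContinuousLinearMap : ((Fin n → ℂ) →ₗ[ℂ] (Fin n → ℂ)) ≃ₗ[ℂ] _).toLinearMap
      ∘ₗ (Matrix.toLin' : Matrix (Fin n) (Fin n) ℂ ≃ₗ[ℂ] _).toLinearMap with hmlinC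
  set mlin : Matrix (Fin n) (Fin n) ℂ →L[ℝ]
      ((Fin n → ℂ) →L[ℝ] (Fin n → ℂ)) :=
    (ContinuousLinearMap.restrictScalarsL ℂ (Fin n → ℂ) (Fin n → ℂ) ℝ ℝ).comp
      ((mlinC.restrictScalars ℝ).toContinuousLinearMap) with hmlin
  have hmlin_apply : ∀ (M : Matrix (Fin n) (Fin n) ℂ) (x : Fin n → ℂ),
      mlin M x = M.mulVec x := by
    intro M x
    simp [hmlin, hmlinC, Matrix.toLin'_apply]
  -- η and its ODE
  set η : ℝ → (Fin n → ℂ) := fun t => (f t).mulVec (ξ t) - lam • ξ t with hη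
  have hη0 : η 0 = 0 := by simp [hη, h0]
  have hηderiv : ∀ t : ℝ, HasDerivAt η (-((A t).mulVec (η t))) t := by
    intro t
    have hc : HasDerivAt (fun s => mlin (f s)) (mlin (deriv f t)) t := by
      exact (mlin.hasFDerivAt (x := f t)).comp_hasDerivAt t (hf t).hasDerivAt
    have hu : HasDerivAt ξ (deriv ξ t) t := (hξ t).hasDerivAt
    have h1 : HasDerivAt (fun s => mlin (f s) (ξ s))
        (mlin (deriv f t) (ξ t) + mlin (f t) (deriv ξ t)) t := hc.clm_apply hu
    have h2 : HasDerivAt (fun s => lam • ξ s) (lam • deriv ξ t) t := hu.const_smul lam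
    have h3 : HasDerivAt (fun s => mlin (f s) (ξ s) - lam • ξ s) _ t := h1.sub h2
    have hfun : (fun s => mlin (f s) (ξ s) - lam • ξ s) = η := by
      funext s; simp [hη, hmlin_apply]
    rw [hfun] at h3
    convert h3 using 1
    rw [hmlin_apply, hmlin_apply, hfode, hξode]
    simp only [hη, Matrix.sub_mulVec, Matrix.mulVec_sub, Matrix.mulVec_smul,
      Matrix.mulVec_neg, ← Matrix.mulVec_mulVec, smul_neg, neg_sub]
    abel
  -- uniqueness of ODE solutions
  suffices key : ∀ b : ℝ, 0 < b → ∀ u ∈ Set.Icc (-b) b, η u = 0 by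
    intro t
    have h := key (|t| + 1) (by positivity) t
      ⟨by linarith [neg_abs_le t], by linarith [le_abs_self t]⟩
    simpa [hη] using sub_eq_zero.mp h
  intro b hb
  have hcont : ContinuousOn (fun u => ‖mlin (A u)‖) (Set.Icc (-b) b) :=
    (continuous_norm.comp (mlin.continuous.comp hA)).continuousOn
  obtain ⟨C, hC⟩ := (isCompact_Icc).exists_bound_of_continuousOn hcont
  set K : NNReal := C.toNNReal with hK
  set s : ℝ → Set (Fin n → ℂ) := fun u => if u ∈ Set.Icc (-b) b then Set.univ else ∅ with hs
  set v : ℝ → (Fin n → ℂ) → (Fin n → ℂ) := fun u x => -((A u).mulVec x) with hv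
  have hlip : ∀ u : ℝ, LipschitzOnWith K (v u) (s u) := by
    intro u
    by_cases hu : u ∈ Set.Icc (-b) b
    · have h1 : LipschitzWith ‖-(mlin (A u))‖₊ ⇑(-(mlin (A u))) :=
        (-(mlin (A u))).lipschitz
      have h2 : ‖-(mlin (A u))‖₊ ≤ K := by
        rw [← NNReal.coe_le_coe]
        simp only [coe_nnnorm, norm_neg]
        calc ‖mlin (A u)‖ ≤ C := by simpa using hC u hu
          _ ≤ K := Real.le_coe_toNNReal C
      have h3 : LipschitzWith K ⇑(-(mlin (A u))) := h1.weaken h2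
      have h4 : ⇑(-(mlin (A u))) = v u := by
        funext x; simp [hv, hmlin_apply]
      rw [h4] at h3
      simpa only [hs, if_pos hu] using h3.lipschitzOnWith
    · simp only [hs, if_neg hu]
      exact lipschitzOnWith_empty _ _
  have ht0 : (0 : ℝ) ∈ Set.Ioo (-b) b := ⟨neg_lt_zero.mpr hb, hb⟩
  have hmem : ∀ u ∈ Set.Ioo (-b) b, η u ∈ s u := by
    intro u hu
    have hu' : u ∈ Set.Icc (-b) b := Set.Ioo_subset_Icc_self hu
    simp only [hs]; rw [if_pos hu']; trivial
  have hmem0 : ∀ u ∈ Set.Ioo (-b) b, (0 : Fin n → ℂ) ∈ s u := by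
    intro u hu
    have hu' : u ∈ Set.Icc (-b) b := Set.Ioo_subset_Icc_self hu
    simp only [hs]; rw [if_pos hu']; trivial
  exact ODE_solution_unique_of_mem_Icc (v := v) (s := s) (K := K) (fun u _ => hlip u) ht0
    (f := η) (g := fun _ => (0 : Fin n → ℂ))
    (fun u _ => (hηderiv u).continuousAt.continuousWithinAt)
    (fun u _ => hηderiv u) hmem
    continuousOn_const
    (fun u _ => by simpa [hv] using (hasDerivAt_const u (0 : Fin n → ℂ)))
    hmem0 hη0
end

section
/- Let U ⊆ ℂ be open and preconnected, let λ be a real number with λ² ≠ 1, and let f : ℂ → Matrix 2 2 ℂ be real-differentiable at every point of U with star (f z) = −(f z), trace (f z) = 0, and (f z) * (f z) = −(λ² : ℂ) • 1 for all z ∈ U. Write ∂₁f z := fderiv ℝ f z 1 and ∂ᵢf z := fderiv ℝ f z i for the derivatives in the directions 1 and i. If for all z ∈ U one has 2 • (∂ᵢf z) = ⁅∂₁f z, f z⁆ and 2 • (∂₁f z) = ⁅f z, ∂ᵢf z⁆, then f is constant on U, i.e. f z = f w for all z, w ∈ U. -/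
attribute [local instance] Matrix.frobeniusNormedAddCommGroup Matrix.frobeniusNormedSpace
attribute [local instance] Matrix.frobeniusNormedRing Matrix.frobeniusNormedAlgebra

set_option maxHeartbeats 1000000

theorem stmt_6 (U : Set ℂ) (hU : IsOpen U) (hUconn : IsPreconnected U)
    (lam : ℝ) (hlam : lam ^ 2 ≠ 1)
    (f : ℂ → Matrix (Fin 2) (Fin 2) ℂ)
    (hdiff : ∀ z ∈ U, DifferentiableAt ℝ f z)
    (hskew : ∀ z ∈ U, star (f z) = -f z)
    (htr : ∀ z ∈ U, (f z).trace = 0)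
    (hsq : ∀ z ∈ U, f z * f z = -((lam ^ 2 : ℂ) • (1 : Matrix (Fin 2) (Fin 2) ℂ)))
    (heq : ∀ z ∈ U,
      2 • (fderiv ℝ f z Complex.I) = ⁅fderiv ℝ f z 1, f z⁆ ∧
      2 • (fderiv ℝ f z 1) = ⁅f z, fderiv ℝ f z Complex.I⁆) :
    ∀ z ∈ U, ∀ w ∈ U, f z = f w := by
  -- Step 1: the derivative vanishes on U
  have key : ∀ z ∈ U, fderiv ℝ f z = 0 := by
    intro z hz
    set D := fderiv ℝ f z with hD
    set F := f z with hF
    -- derivative of f * f is zero since f * f is locally constant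
    have hconst : (fun w => f w * f w) =ᶠ[nhds z]
        (fun _ => -((lam ^ 2 : ℂ) • (1 : Matrix (Fin 2) (Fin 2) ℂ))) := by
      filter_upwards [hU.mem_nhds hz] with w hw using hsq w hw
    have hmul : HasFDerivAt (fun w => f w * f w)
        (F • D + D.smulRight F) z :=
      (hdiff z hz).hasFDerivAt.mul' (hdiff z hz).hasFDerivAt
    have hzero : HasFDerivAt (fun w => f w * f w)
        (0 : ℂ →L[ℝ] Matrix (Fin 2) (Fin 2) ℂ) z :=
      (hasFDerivAt_const _ _).congr_of_eventuallyEq hconst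
    have hsum : F • D + D.smulRight F = 0 := hmul.unique hzero
    have hanti' : ∀ v : ℂ, F * D v + D v * F = 0 := by
      intro v
      have := congrArg (fun L => L v) hsum
      simpa only [ContinuousLinearMap.add_apply, ContinuousLinearMap.smul_apply,
        ContinuousLinearMap.smulRight_apply, ContinuousLinearMap.zero_apply,
        smul_eq_mul] using this
    have cancel : ∀ A B : Matrix (Fin 2) (Fin 2) ℂ, 2 • A = 2 • B → A = B := by
      intro A B h
      rw [two_nsmul, two_nsmul] at h
      have h2 : (2 : ℂ) • A = (2 : ℂ) • B := by rw [two_smul, two_smul]; exact h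
      exact smul_right_injective _ two_ne_zero h2
    obtain ⟨h1, h2⟩ := heq z hz
    rw [← hD, ← hF] at h1 h2
    have ha1 : F * D 1 = -(D 1 * F) := eq_neg_of_add_eq_zero_left (hanti' 1)
    have haI : F * D Complex.I = -(D Complex.I * F) :=
      eq_neg_of_add_eq_zero_left (hanti' Complex.I)
    have hDI' : D Complex.I = D 1 * F := by
      apply cancel
      rw [h1, Ring.lie_def, ha1, two_nsmul]
      abel
    have hD1' : D 1 = -(D Complex.I * F) := by
      apply cancel
      rw [h2, Ring.lie_def, haI, two_nsmul]
      abel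
    have hFF : F * F = -((lam ^ 2 : ℂ) • (1 : Matrix (Fin 2) (Fin 2) ℂ)) := hsq z hz
    -- D I = D 1 * F = -(D I * F) * F = -(D I * (F*F)) = (lam^2) • D I
    have hDIeq : D Complex.I = (lam ^ 2 : ℂ) • D Complex.I := by
      calc D Complex.I = D 1 * F := hDI'
        _ = -(D Complex.I * F) * F := by rw [← hD1']
        _ = -(D Complex.I * (F * F)) := by noncomm_ring
        _ = (lam ^ 2 : ℂ) • D Complex.I := by
            rw [hFF]; simp [Matrix.mul_smul]
    have hDI0 : D Complex.I = 0 := by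
      have h : ((lam ^ 2 : ℂ) - 1) • D Complex.I = 0 := by
        rw [sub_smul, one_smul, ← hDIeq]; abel
      have hne : ((lam ^ 2 : ℂ) - 1) ≠ 0 := by
        intro hc
        apply hlam
        have h1' : ((lam : ℂ)) ^ 2 = 1 := sub_eq_zero.mp hc
        exact_mod_cast h1'
      exact (smul_eq_zero.mp h).resolve_left hne
    have hD10 : D 1 = 0 := by rw [hD1', hDI0, Matrix.zero_mul, neg_zero]
    -- conclude D = 0
    refine ContinuousLinearMap.ext fun v => ?_
    have hv : (v : ℂ) = v.re • (1 : ℂ) + v.im • Complex.I := by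
      simp [Complex.ext_iff]
    rw [hv, map_add, map_smul, map_smul, hDI0, hD10]
    simp
  -- Step 2: f is locally constant on U (via convex balls)
  have hloc : ∀ z ∈ U, ∃ ε > 0, Metric.ball z ε ⊆ U ∧
      ∀ w ∈ Metric.ball z ε, f w = f z := by
    intro z hz
    obtain ⟨ε, hε, hball⟩ := Metric.isOpen_iff.mp hU z hz
    refine ⟨ε, hε, hball, fun w hw => ?_⟩
    refine (convex_ball z ε).is_const_of_fderivWithin_eq_zero
      (fun x hx => (hdiff x (hball hx)).differentiableWithinAt) ?_ hw (Metric.mem_ball_self hε)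
    intro x hx
    rw [fderivWithin_of_isOpen Metric.isOpen_ball hx]
    exact key x (hball hx)
  -- Step 3: constancy via preconnectedness
  intro z hz w hw
  have : PreconnectedSpace U := Subtype.preconnectedSpace hUconn
  have hlc : IsLocallyConstant (fun u : U => f u) := by
    rw [IsLocallyConstant.iff_exists_open]
    rintro ⟨x, hx⟩
    obtain ⟨ε, hε, hball, hconst⟩ := hloc x hx
    refine ⟨Subtype.val ⁻¹' Metric.ball x ε, ?_, ?_, ?_⟩
    · exact Metric.isOpen_ball.preimage continuous_subtype_val
    · exact Set.mem_preimage.mpr (Metric.mem_ball_self hε)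
    · rintro ⟨y, hy⟩ hmem
      exact hconst y hmem
  exact hlc.apply_eq_of_preconnectedSpace ⟨z, hz⟩ ⟨w, hw⟩
end

section
/- Let U ⊆ ℂ be open and let f : ℂ → Matrix 2 2 ℂ be real-differentiable at every point of U with star (f z) = −(f z), trace (f z) = 0, and (f z) * (f z) = −1 for all z ∈ U. Write ∂₁f z := fderiv ℝ f z 1 and ∂ᵢf z := fderiv ℝ f z i. Then for every z ∈ U the following are equivalent: (a) 2 • (∂ᵢf z) = ⁅∂₁f z, f z⁆ and 2 • (∂₁f z) = ⁅f z, ∂ᵢf z⁆; (b) ∂ᵢf z = (∂₁f z) * (f z). -/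
attribute [local instance] Matrix.frobeniusNormedAddCommGroup Matrix.frobeniusNormedSpace
attribute [local instance] Matrix.frobeniusNormedRing Matrix.frobeniusNormedAlgebra

theorem stmt_7 (U : Set ℂ) (hU : IsOpen U)
    (f : ℂ → Matrix (Fin 2) (Fin 2) ℂ)
    (hdiff : ∀ z ∈ U, DifferentiableAt ℝ f z)
    (hskew : ∀ z ∈ U, star (f z) = -f z)
    (htr : ∀ z ∈ U, (f z).trace = 0)
    (hsq : ∀ z ∈ U, f z * f z = -1) :
    ∀ z ∈ U,
      ((2 • (fderiv ℝ f z Complex.I) = ⁅fderiv ℝ f z 1, f z⁆ ∧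
        2 • (fderiv ℝ f z 1) = ⁅f z, fderiv ℝ f z Complex.I⁆) ↔
      fderiv ℝ f z Complex.I = (fderiv ℝ f z 1) * f z) := by
  intro z hz
  have hd := hdiff z hz
  have hF2 : f z * f z = -1 := hsq z hz
  have hconst : fderiv ℝ (fun w => f w * f w) z = 0 := by
    have hev : (fun w => f w * f w) =ᶠ[nhds z]
        (fun _ => (-1 : Matrix (Fin 2) (Fin 2) ℂ)) := by
      filter_upwards [hU.mem_nhds hz] with w hw using hsq w hw
    rw [hev.fderiv_eq]
    simp
  have hmul := (hd.hasFDerivAt.mul' hd.hasFDerivAt).fderiv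
  have hanti : ∀ v : ℂ, f z * (fderiv ℝ f z v) + (fderiv ℝ f z v) * f z = 0 := by
    intro v
    have := congrArg (fun L => L v) (hconst.symm.trans hmul)
    have e : (f z • fderiv ℝ f z + MulOpposite.op (f z) • fderiv ℝ f z) v = f z * fderiv ℝ f z v + fderiv ℝ f z v * f z := rfl
    exact (e ▸ this).symm
  set A := fderiv ℝ f z 1 with hA
  set B := fderiv ℝ f z Complex.I with hB
  have hA' : f z * A = -(A * f z) := eq_neg_of_add_eq_zero_left (hanti 1)
  have hB' : f z * B = -(B * f z) := eq_neg_of_add_eq_zero_left (hanti Complex.I)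
  constructor
  · rintro ⟨h1, -⟩
    have h2 : (2 : ℂ) • B = (2 : ℂ) • (A * f z) := by
      have hc : ⁅A, f z⁆ = A * f z + A * f z := by
        rw [Ring.lie_def, hA']; noncomm_ring
      rw [← h1] at hc
      rw [two_smul, two_smul]
      simpa [two_smul] using hc
    exact smul_right_injective _ (two_ne_zero) h2
  · intro h
    constructor
    · rw [Ring.lie_def, hA', h, two_smul]; noncomm_ring
    · rw [Ring.lie_def, h]
      have hx : f z * (A * f z) = -(A * f z * f z) := by
        rw [← mul_assoc, hA']; noncomm_ring
      rw [hx]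
      have h2 : A * f z * f z = -A := by rw [mul_assoc, hF2]; noncomm_ring
      rw [h2, two_smul]; noncomm_ring
end

section
/- Let n ≥ 1 and let a, b, c be n×n complex matrices with (star b) * a = 0 and (star b) * c = 0. Define u : ℝ → Matrix n n ℂ by u θ = exp(−iθ) • a + b + exp(iθ) • c and suppose (star (u θ)) * (u θ) = 1 for all θ ∈ ℝ. Then for all θ ∈ ℝ, (star (u θ)) * ((−i·exp(−iθ)) • a + (i·exp(iθ)) • c) = i • ((star c) * c − (star a) * a); in particular u(θ)* · u′(θ) is independent of θ, where u′(θ) = −i e^{−iθ} a + i e^{iθ} c is the derivative of u. -/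
theorem stmt_9 (n : ℕ) (hn : 1 ≤ n) (a b c : Matrix (Fin n) (Fin n) ℂ)
    (hba : star b * a = 0) (hbc : star b * c = 0)
    (h : ∀ θ : ℝ,
      star (Complex.exp (-(Complex.I * θ)) • a + b + Complex.exp (Complex.I * θ) • c) *
        (Complex.exp (-(Complex.I * θ)) • a + b + Complex.exp (Complex.I * θ) • c) = 1) :
    ∀ θ : ℝ,
      star (Complex.exp (-(Complex.I * θ)) • a + b + Complex.exp (Complex.I * θ) • c) *
        ((-Complex.I * Complex.exp (-(Complex.I * θ))) • a +
          (Complex.I * Complex.exp (Complex.I * θ)) • c) =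
      Complex.I • (star c * c - star a * a) := by
  have hab : star a * b = 0 := by
    have := congrArg star hba
    simpa [star_mul] using this
  have hcb : star c * b = 0 := by
    have := congrArg star hbc
    simpa [star_mul] using this
  -- conjugates of exponentials
  have hconj : ∀ θ : ℝ, (starRingEnd ℂ) (Complex.exp (Complex.I * θ)) =
      Complex.exp (-(Complex.I * θ)) := by
    intro θ
    rw [← Complex.exp_conj]
    congr 1
    simp [Complex.conj_ofReal]
  have hconj' : ∀ θ : ℝ, (starRingEnd ℂ) (Complex.exp (-(Complex.I * θ))) =
      Complex.exp (Complex.I * θ) := by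
    intro θ
    rw [← Complex.exp_conj]
    congr 1
    simp [Complex.conj_ofReal]
  have hEF : ∀ θ : ℝ, Complex.exp (Complex.I * θ) * Complex.exp (-(Complex.I * θ)) = 1 := by
    intro θ
    rw [← Complex.exp_add]
    simp
  have hFE : ∀ θ : ℝ, Complex.exp (-(Complex.I * θ)) * Complex.exp (Complex.I * θ) = 1 := by
    intro θ
    rw [mul_comm]; exact hEF θ
  have key : ∀ θ : ℝ,
      star a * a + star b * b + star c * c
        + (Complex.exp (Complex.I * θ) * Complex.exp (Complex.I * θ)) • (star a * c)
        + (Complex.exp (-(Complex.I * θ)) * Complex.exp (-(Complex.I * θ))) • (star c * a)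
        = 1 := by
    intro θ
    have H := h θ
    rw [star_add, star_add, star_smul, star_smul] at H
    simp only [RCLike.star_def, hconj, hconj'] at H
    rw [Matrix.add_mul, Matrix.add_mul, Matrix.mul_add, Matrix.mul_add, Matrix.mul_add,
      Matrix.mul_add, Matrix.mul_add, Matrix.mul_add] at H
    simp only [Matrix.smul_mul, Matrix.mul_smul, smul_smul, hab, hcb, hba, hbc,
      smul_zero, add_zero, zero_add, hEF θ, hFE θ, one_smul] at H
    rw [← H]
    module
  -- special values of exponentials
  have E2 : Complex.exp (Complex.I * ((Real.pi/2 : ℝ) : ℂ)) = Complex.I := by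
    rw [mul_comm, Complex.exp_mul_I]; push_cast; simp
  have F2 : Complex.exp (-(Complex.I * ((Real.pi/2 : ℝ) : ℂ))) = -Complex.I := by
    rw [Complex.exp_neg, E2, Complex.inv_I]
  have E4 : Complex.exp (Complex.I * ((Real.pi/4 : ℝ) : ℂ)) *
      Complex.exp (Complex.I * ((Real.pi/4 : ℝ) : ℂ)) = Complex.I := by
    rw [← Complex.exp_add]
    have h4 : Complex.I * ((Real.pi/4 : ℝ) : ℂ) + Complex.I * ((Real.pi/4 : ℝ) : ℂ)
        = Complex.I * ((Real.pi/2 : ℝ) : ℂ) := by push_cast; ring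
    rw [h4, E2]
  have F4 : Complex.exp (-(Complex.I * ((Real.pi/4 : ℝ) : ℂ))) *
      Complex.exp (-(Complex.I * ((Real.pi/4 : ℝ) : ℂ))) = -Complex.I := by
    rw [Complex.exp_neg, ← mul_inv, E4, Complex.inv_I]
  have e0 := key 0
  simp only [Complex.ofReal_zero, mul_zero, neg_zero, Complex.exp_zero, one_mul,
    one_smul] at e0
  have e1 := key (Real.pi/2)
  rw [E2, F2] at e1
  simp only [Complex.I_mul_I, neg_mul_neg] at e1
  have e2 := key (Real.pi/4)
  rw [E4, F4] at e2
  -- from e0 and e1 : star a * c + star c * a = 0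
  have hsum : star a * c + star c * a = 0 := by
    have h2 : (2:ℂ) • (star a * c + star c * a) = 0 := by
      rw [← sub_eq_zero_of_eq (e0.trans e1.symm)]
      module
    rcases smul_eq_zero.mp h2 with h' | h'
    · exact absurd h' (by norm_num)
    · exact h'
  have hR : star a * c = -(star c * a) := by
    rwa [add_eq_zero_iff_eq_neg] at hsum
  rw [hR] at e0 e2
  have hca : star c * a = 0 := by
    have h3 : ((-2:ℂ) * Complex.I) • (star c * a) = 0 := by
      rw [← sub_eq_zero_of_eq (e2.trans e0.symm)]
      module
    rcases smul_eq_zero.mp h3 with h' | h'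
    · exact absurd h' (by simp [Complex.I_ne_zero])
    · exact h'
  have hac : star a * c = 0 := by rw [hR, hca, neg_zero]
  -- final computation
  intro θ
  rw [star_add, star_add, star_smul, star_smul]
  simp only [RCLike.star_def, hconj, hconj']
  rw [Matrix.add_mul, Matrix.add_mul, Matrix.mul_add, Matrix.mul_add, Matrix.mul_add]
  simp only [Matrix.smul_mul, Matrix.mul_smul, smul_smul, hba, hbc, hac, hca,
    smul_zero, add_zero, zero_add]
  rw [smul_sub]
  match_scalars
  · linear_combination (-Complex.I) * hEF θ
  · linear_combination Complex.I * hEF θ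
end

section
/- Let F : ℝ → ℂ be continuous and bounded, and let f : ℝ → ℂ be a bounded, twice differentiable function with deriv (deriv f) t = f t − F t for all t ∈ ℝ. Then for every t ∈ ℝ, 2 * f t = ∫_{s ∈ (0,∞)} e^{−s} · F (t + s) ds + ∫_{s ∈ (0,∞)} e^{−s} · F (t − s) ds. -/
open MeasureTheory intervalIntegral Filter Set

theorem stmt_10 (F : ℝ → ℂ) (hFcont : Continuous F)
    (C : ℝ) (hFbd : ∀ t : ℝ, ‖F t‖ ≤ C)
    (f : ℝ → ℂ) (D : ℝ) (hfbd : ∀ t : ℝ, ‖f t‖ ≤ D)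
    (hf : Differentiable ℝ f) (hf' : Differentiable ℝ (deriv f))
    (hode : ∀ t : ℝ, deriv (deriv f) t = f t - F t) :
    ∀ t : ℝ, 2 * f t =
      (∫ s in Set.Ioi (0 : ℝ), (Real.exp (-s) : ℂ) * F (t + s)) +
      (∫ s in Set.Ioi (0 : ℝ), (Real.exp (-s) : ℂ) * F (t - s)) := by
  have hC : 0 ≤ C := le_trans (norm_nonneg _) (hFbd 0)
  have hD : 0 ≤ D := le_trans (norm_nonneg _) (hfbd 0)
  have hfc : Continuous f := hf.continuous
  have hf'c : Continuous (deriv f) := hf'.continuous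
  -- bound on deriv f
  set M : ℝ := 3 * D + C with hM
  have hMbd : ∀ t : ℝ, ‖deriv f t‖ ≤ M := by
    intro t
    set w : ℝ → ℂ := fun s => ((t : ℂ) + 1 - (s : ℝ)) * deriv f s + f s with hw
    have hder : ∀ s ∈ uIcc t (t + 1),
        HasDerivAt w (((t : ℂ) + 1 - (s : ℝ)) * (f s - F s)) s := by
      intro s _
      have h1 : HasDerivAt (fun s : ℝ => ((t : ℂ) + 1 - (s : ℝ))) (-1) s := by
        simpa using ((Complex.ofRealCLM.hasDerivAt (x := s)).const_sub ((t : ℂ) + 1))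
      have h2 : HasDerivAt (deriv f) (deriv (deriv f) s) s :=
        (hf' s).hasDerivAt
      have := (h1.mul h2).add (hf s).hasDerivAt
      exact this.congr_deriv (by rw [hode s]; ring)
    have hint : IntervalIntegrable (fun s : ℝ => ((t : ℂ) + 1 - (s : ℝ)) * (f s - F s))
        volume t (t + 1) := by
      apply Continuous.intervalIntegrable
      exact ((continuous_const.sub (Complex.continuous_ofReal)).mul (hfc.sub hFcont))
    have hFTC := integral_eq_sub_of_hasDerivAt hder hint
    have hw1 : w (t + 1) = f (t + 1) := by simp [hw]
    have hw0 : w t = deriv f t + f t := by simp [hw]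
    have hbnd : ‖∫ s in t..(t + 1), ((t : ℂ) + 1 - (s : ℝ)) * (f s - F s)‖ ≤
        (D + C) * |(t + 1) - t| := by
      apply intervalIntegral.norm_integral_le_of_norm_le_const
      intro x hx
      rw [Set.uIoc_of_le (by linarith)] at hx
      have hx1 : 0 ≤ t + 1 - x := by linarith [hx.2]
      have hx2 : t + 1 - x ≤ 1 := by linarith [hx.1]
      calc ‖((t : ℂ) + 1 - (x : ℝ)) * (f x - F x)‖
          = ‖((t : ℂ) + 1 - (x : ℝ))‖ * ‖f x - F x‖ := norm_mul _ _
        _ ≤ 1 * (D + C) := by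
            apply mul_le_mul
            · have : ((t : ℂ) + 1 - (x : ℝ)) = ((t + 1 - x : ℝ) : ℂ) := by push_cast; ring
              rw [this, Complex.norm_real, Real.norm_eq_abs, abs_of_nonneg hx1]
              exact hx2
            · exact le_trans (norm_sub_le _ _) (add_le_add (hfbd x) (hFbd x))
            · exact norm_nonneg _
            · norm_num
        _ = D + C := one_mul _
    have : deriv f t = f (t + 1) - f t - ∫ s in t..(t + 1), ((t : ℂ) + 1 - (s : ℝ)) * (f s - F s) := by
      linear_combination hFTC + hw1 - hw0
    rw [this]
    have h1 : ‖f (t + 1) - f t‖ ≤ D + D := le_trans (norm_sub_le _ _) (add_le_add (hfbd _) (hfbd _))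
    have h2 := hbnd
    simp only [add_sub_cancel_left, abs_one, mul_one] at h2
    calc ‖f (t + 1) - f t - _‖ ≤ (D + D) + (D + C) :=
          le_trans (norm_sub_le _ _) (add_le_add h1 h2)
      _ = M := by rw [hM]; ring
  -- the auxiliary functions u and v
  set u : ℝ → ℂ := fun x => (Real.exp (-x) : ℂ) * (deriv f x + f x) with hu
  set v : ℝ → ℂ := fun x => (Real.exp x : ℂ) * (deriv f x - f x) with hv
  have hexp : ∀ x : ℝ, HasDerivAt (fun s : ℝ => ((Real.exp (-s) : ℝ) : ℂ))
      (-(Real.exp (-x) : ℝ) : ℂ) x := by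
    intro x
    have : HasDerivAt (fun s : ℝ => Real.exp (-s)) (Real.exp (-x) * (-1)) x :=
      (Real.hasDerivAt_exp (-x)).comp x (hasDerivAt_neg x)
    have := this.ofReal_comp
    convert this using 1
    push_cast; ring
  have hexp' : ∀ x : ℝ, HasDerivAt (fun s : ℝ => ((Real.exp s : ℝ) : ℂ))
      ((Real.exp x : ℝ) : ℂ) x := fun x => (Real.hasDerivAt_exp x).ofReal_comp
  have hudA : ∀ x : ℝ, HasDerivAt u (-(Real.exp (-x) : ℂ) * F x) x := by
    intro x
    have h2 : HasDerivAt (fun s => deriv f s + f s) (deriv (deriv f) x + deriv f x) x :=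
      (hf' x).hasDerivAt.add (hf x).hasDerivAt
    have := (hexp x).mul h2
    exact this.congr_deriv (by rw [hode x]; push_cast; ring)
  have hvdA : ∀ x : ℝ, HasDerivAt v (-(Real.exp x : ℂ) * F x) x := by
    intro x
    have h2 : HasDerivAt (fun s => deriv f s - f s) (deriv (deriv f) x - deriv f x) x :=
      (hf' x).hasDerivAt.sub (hf x).hasDerivAt
    have := (hexp' x).mul h2
    exact this.congr_deriv (by rw [hode x]; push_cast; ring)
  have hcont1 : Continuous fun x : ℝ => -(Real.exp (-x) : ℂ) * F x := by
    continuity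
  have hcont2 : Continuous fun x : ℝ => -(Real.exp x : ℂ) * F x := by
    continuity
  -- FTC identities
  have hFTCu : ∀ a b : ℝ, u b - u a = ∫ x in a..b, -(Real.exp (-x) : ℂ) * F x := by
    intro a b
    exact (integral_eq_sub_of_hasDerivAt (fun x _ => hudA x)
      (hcont1.intervalIntegrable a b)).symm
  have hFTCv : ∀ a b : ℝ, v b - v a = ∫ x in a..b, -(Real.exp x : ℂ) * F x := by
    intro a b
    exact (integral_eq_sub_of_hasDerivAt (fun x _ => hvdA x)
      (hcont2.intervalIntegrable a b)).symm
  -- bounds on u, v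
  have hubd : ∀ x : ℝ, ‖u x‖ ≤ Real.exp (-x) * (M + D) := by
    intro x
    rw [hu]
    simp only [norm_mul, Complex.norm_real, Real.norm_eq_abs, abs_of_pos (Real.exp_pos _)]
    exact mul_le_mul_of_nonneg_left
      (le_trans (norm_add_le _ _) (add_le_add (hMbd x) (hfbd x))) (Real.exp_pos _).le
  have hvbd : ∀ x : ℝ, ‖v x‖ ≤ Real.exp x * (M + D) := by
    intro x
    rw [hv]
    simp only [norm_mul, Complex.norm_real, Real.norm_eq_abs, abs_of_pos (Real.exp_pos _)]
    exact mul_le_mul_of_nonneg_left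
      (le_trans (norm_sub_le _ _) (add_le_add (hMbd x) (hfbd x))) (Real.exp_pos _).le
  intro t
  -- integrability of the two integrands
  have hintg : ∀ g : ℝ → ℝ, Continuous g →
      IntegrableOn (fun s : ℝ => (Real.exp (-s) : ℂ) * F (g s)) (Ioi (0:ℝ)) := by
    intro g hg
    apply Integrable.mono' ((exp_neg_integrableOn_Ioi (0:ℝ) one_pos).const_mul C)
    · exact ((Complex.continuous_ofReal.comp (Real.continuous_exp.comp continuous_neg)).mul
        (hFcont.comp hg)).aestronglyMeasurable.restrict
    · filter_upwards with s
      simp only [norm_mul, Complex.norm_real, Real.norm_eq_abs,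
        abs_of_pos (Real.exp_pos _), one_mul, neg_mul, neg_one_mul]
      rw [mul_comm C]
      exact mul_le_mul_of_nonneg_left (hFbd _) (Real.exp_pos _).le
  have hi1 : IntegrableOn (fun s : ℝ => (Real.exp (-s) : ℂ) * F (t + s)) (Ioi (0:ℝ)) := by
    simpa using hintg (fun s => t + s) (by continuity)
  have hi2 : IntegrableOn (fun s : ℝ => (Real.exp (-s) : ℂ) * F (t - s)) (Ioi (0:ℝ)) := by
    simpa using hintg (fun s => t - s) (by continuity)
  -- limits of interval integrals to improper integrals
  have hlim1 := intervalIntegral_tendsto_integral_Ioi 0 hi1 tendsto_id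
  have hlim2 := intervalIntegral_tendsto_integral_Ioi 0 hi2 tendsto_id
  -- u tends to 0 at top (along x = t + T), v tends to 0 at bot (along x = t - T)
  have huT : Tendsto (fun T : ℝ => u (t + T)) atTop (nhds 0) := by
    rw [tendsto_zero_iff_norm_tendsto_zero]
    apply squeeze_zero (fun T => norm_nonneg _) (fun T => hubd (t + T))
    have : Tendsto (fun T : ℝ => Real.exp (-(t + T))) atTop (nhds 0) := by
      apply Real.tendsto_exp_atBot.comp
      apply tendsto_neg_atBot_iff.mpr
      exact tendsto_atTop_add_const_left _ t tendsto_id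
    simpa using this.mul_const (M + D)
  have hvT : Tendsto (fun T : ℝ => v (t - T)) atTop (nhds 0) := by
    rw [tendsto_zero_iff_norm_tendsto_zero]
    apply squeeze_zero (fun T => norm_nonneg _) (fun T => hvbd (t - T))
    have : Tendsto (fun T : ℝ => Real.exp (t - T)) atTop (nhds 0) := by
      apply Real.tendsto_exp_atBot.comp
      have h := tendsto_atBot_add_const_left atTop t (tendsto_neg_atTop_atBot : Tendsto (fun x : ℝ => -x) atTop atBot)
      exact h.congr (fun x => by simp only [sub_eq_add_neg])
    simpa using this.mul_const (M + D)
  -- identify interval integrals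
  have key1 : ∀ T : ℝ, (∫ s in (0:ℝ)..T, (Real.exp (-s) : ℂ) * F (t + s)) =
      (Real.exp t : ℂ) * (u t - u (t + T)) := by
    intro T
    have comp : (∫ s in (0:ℝ)..T, (Real.exp (-(t + s)) : ℂ) * F (t + s)) =
        ∫ x in (t + 0)..(t + T), (Real.exp (-x) : ℂ) * F x :=
      intervalIntegral.integral_comp_add_left (fun x => (Real.exp (-x) : ℂ) * F x) t
    have step : (∫ s in (0:ℝ)..T, (Real.exp (-s) : ℂ) * F (t + s)) =
        (Real.exp t : ℂ) * ∫ s in (0:ℝ)..T, (Real.exp (-(t + s)) : ℂ) * F (t + s) := by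
      rw [← intervalIntegral.integral_const_mul]
      congr 1; funext s
      rw [← mul_assoc, ← Complex.ofReal_mul, ← Real.exp_add]
      ring_nf
    rw [step, comp]
    have h := hFTCu t (t + T)
    simp only [neg_mul] at h
    rw [intervalIntegral.integral_neg] at h
    have h2 : (∫ x in t..(t + T), (Real.exp (-x) : ℂ) * F x) = u t - u (t + T) := by
      linear_combination h
    rw [add_zero, h2]
  have key2 : ∀ T : ℝ, (∫ s in (0:ℝ)..T, (Real.exp (-s) : ℂ) * F (t - s)) =
      (Real.exp (-t) : ℂ) * (v (t - T) - v t) := by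
    intro T
    have comp : (∫ s in (0:ℝ)..T, (Real.exp (t - s) : ℂ) * F (t - s)) =
        ∫ x in (t - T)..(t - 0), (Real.exp x : ℂ) * F x :=
      intervalIntegral.integral_comp_sub_left (fun x => (Real.exp x : ℂ) * F x) t
    have step : (∫ s in (0:ℝ)..T, (Real.exp (-s) : ℂ) * F (t - s)) =
        (Real.exp (-t) : ℂ) * ∫ s in (0:ℝ)..T, (Real.exp (t - s) : ℂ) * F (t - s) := by
      rw [← intervalIntegral.integral_const_mul]
      congr 1; funext s
      rw [← mul_assoc, ← Complex.ofReal_mul, ← Real.exp_add]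
      ring_nf
    rw [step, comp]
    have h := hFTCv (t - T) t
    simp only [neg_mul] at h
    rw [intervalIntegral.integral_neg] at h
    have h2 : (∫ x in (t - T)..t, (Real.exp x : ℂ) * F x) = v (t - T) - v t := by
      linear_combination h
    rw [sub_zero, h2]
  -- the two limits
  have tend1 : Tendsto (fun T : ℝ => ∫ s in (0:ℝ)..T, (Real.exp (-s) : ℂ) * F (t + s))
      atTop (nhds (deriv f t + f t)) := by
    simp only [key1]
    have hval1 : (Real.exp t : ℂ) * u t = deriv f t + f t := by
      simp only [hu, ← mul_assoc, ← Complex.ofReal_mul, ← Real.exp_add]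
      simp
    have h0 := ((tendsto_const_nhds : Filter.Tendsto (fun _ : ℝ => u t) Filter.atTop (nhds (u t))).sub huT).const_mul ((Real.exp t : ℂ))
    rw [sub_zero] at h0
    convert h0 using 2
    exact hval1.symm
  have tend2 : Tendsto (fun T : ℝ => ∫ s in (0:ℝ)..T, (Real.exp (-s) : ℂ) * F (t - s))
      atTop (nhds (f t - deriv f t)) := by
    simp only [key2]
    have hval2 : (Real.exp (-t) : ℂ) * ((0:ℂ) - v t) = f t - deriv f t := by
      simp only [hv, zero_sub, mul_neg, ← mul_assoc, ← Complex.ofReal_mul, ← Real.exp_add]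
      simp [neg_sub]
    have h0 := (hvT.sub (tendsto_const_nhds : Filter.Tendsto (fun _ : ℝ => v t) Filter.atTop (nhds (v t)))).const_mul ((Real.exp (-t) : ℂ))
    convert h0 using 2
    exact hval2.symm
  have eq1 : (∫ s in Set.Ioi (0 : ℝ), (Real.exp (-s) : ℂ) * F (t + s)) = deriv f t + f t :=
    tendsto_nhds_unique hlim1 tend1
  have eq2 : (∫ s in Set.Ioi (0 : ℝ), (Real.exp (-s) : ℂ) * F (t - s)) = f t - deriv f t :=
    tendsto_nhds_unique hlim2 tend2
  rw [eq1, eq2]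
  ring
end

section
/- Let F : ℝ → ℂ be continuous, let C ≥ 0 satisfy ‖F t‖ ≤ C for all t ∈ ℝ, and let f : ℝ → ℂ be a bounded, twice differentiable function with deriv (deriv f) t = f t − F t for all t ∈ ℝ. Then ‖f t‖ ≤ C for all t ∈ ℝ. -/
lemma lemA (g : ℝ → ℝ) (hg : Differentiable ℝ g) (hg' : Differentiable ℝ (deriv g))
    (M : ℝ) (hbd : ∀ t, g t ≤ M) (hode : ∀ t, g t ≤ deriv (deriv g) t)
    (a : ℝ) (ha : 0 < g a) (ha' : 0 ≤ deriv g a) : False := by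
  set c : ℝ := deriv g a + g a with hc
  have hcpos : 0 < c := by linarith
  -- m = exp(-t) * (g' + g) is monotone
  have hmderiv : ∀ x : ℝ, HasDerivAt (fun t => Real.exp (-t) * (deriv g t + g t))
      (Real.exp (-x) * (-1) * (deriv g x + g x)
        + Real.exp (-x) * (deriv (deriv g) x + deriv g x)) x := by
    intro x
    have h1 : HasDerivAt (fun t : ℝ => Real.exp (-t)) (Real.exp (-x) * (-1)) x :=
      (Real.hasDerivAt_exp (-x)).comp x (hasDerivAt_neg x)
    have h2 : HasDerivAt (fun t => deriv g t + g t) (deriv (deriv g) x + deriv g x) x :=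
      ((hg' x).hasDerivAt.add (hg x).hasDerivAt)
    exact h1.mul h2
  have hmono_m : Monotone (fun t => Real.exp (-t) * (deriv g t + g t)) := by
    apply monotone_of_deriv_nonneg
    · intro x; exact (hmderiv x).differentiableAt
    · intro x
      rw [(hmderiv x).deriv]
      nlinarith [mul_nonneg (Real.exp_pos (-x)).le (sub_nonneg.2 (hode x))]
  -- hence for t ≥ a, g' t + g t ≥ c * exp (t - a)
  have hq : ∀ t, a ≤ t → c * Real.exp (t - a) ≤ deriv g t + g t := by
    intro t ht
    have h := hmono_m ht
    simp only at h
    have e1 : Real.exp t * Real.exp (-t) = 1 := by rw [← Real.exp_add]; simp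
    have e2 : Real.exp t * Real.exp (-a) = Real.exp (t - a) := by
      rw [← Real.exp_add]; ring_nf
    have h2 := mul_le_mul_of_nonneg_left h (Real.exp_pos t).le
    calc c * Real.exp (t - a)
        = Real.exp t * (Real.exp (-a) * (deriv g a + g a)) := by rw [hc, ← e2]; ring
      _ ≤ Real.exp t * (Real.exp (-t) * (deriv g t + g t)) := h2
      _ = (Real.exp t * Real.exp (-t)) * (deriv g t + g t) := by ring
      _ = deriv g t + g t := by rw [e1, one_mul]
  -- r = exp t * g t - (c/2) * exp (2t - a) is monotone on [a, ∞)
  set r : ℝ → ℝ := fun t => Real.exp t * g t - c / 2 * Real.exp (2 * t - a) with hr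
  have hrderiv : ∀ x : ℝ, HasDerivAt r
      (Real.exp x * g x + Real.exp x * deriv g x - c / 2 * (Real.exp (2 * x - a) * 2)) x := by
    intro x
    have h1 : HasDerivAt (fun t => Real.exp t * g t)
        (Real.exp x * g x + Real.exp x * deriv g x) x :=
      (Real.hasDerivAt_exp x).mul (hg x).hasDerivAt
    have h2 : HasDerivAt (fun t : ℝ => 2 * t - a) 2 x := by
      simpa using ((hasDerivAt_id x).const_mul 2).sub_const a
    have h3 : HasDerivAt (fun t : ℝ => c / 2 * Real.exp (2 * t - a))
        (c / 2 * (Real.exp (2 * x - a) * 2)) x :=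
      (((Real.hasDerivAt_exp (2 * x - a)).comp x h2)).const_mul (c / 2)
    exact h1.sub h3
  have hmono_r : MonotoneOn r (Set.Ici a) := by
    apply monotoneOn_of_deriv_nonneg (convex_Ici a)
    · exact (fun x _ => ((hrderiv x).differentiableAt.continuousAt.continuousWithinAt))
    · intro x _; exact (hrderiv x).differentiableAt.differentiableWithinAt
    · intro x hx
      rw [interior_Ici] at hx
      rw [(hrderiv x).deriv]
      have hqx := hq x hx.le
      have e2 : Real.exp x * Real.exp (x - a) = Real.exp (2 * x - a) := by
        rw [← Real.exp_add]; ring_nf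
      have h5 := mul_le_mul_of_nonneg_left hqx (Real.exp_pos x).le
      rw [show Real.exp x * (c * Real.exp (x - a)) = c * (Real.exp x * Real.exp (x - a)) from
        by ring, e2] at h5
      ring_nf at h5 ⊢
      linarith
  -- lower bound for g t when t ≥ a
  have hlow : ∀ t, a ≤ t → r a * Real.exp (-t) + c / 2 * Real.exp (t - a) ≤ g t := by
    intro t ht
    have h := hmono_r (Set.self_mem_Ici) (Set.mem_Ici.2 ht) ht
    have e1 : Real.exp (-t) * Real.exp t = 1 := by rw [← Real.exp_add]; simp
    have e2 : Real.exp (-t) * Real.exp (2 * t - a) = Real.exp (t - a) := by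
      rw [← Real.exp_add]; ring_nf
    have h2 := mul_le_mul_of_nonneg_left h (Real.exp_pos (-t)).le
    simp only [hr] at h2
    have hra : r a = Real.exp a * g a - c / 2 * Real.exp (2 * a - a) := rfl
    calc r a * Real.exp (-t) + c / 2 * Real.exp (t - a)
        = Real.exp (-t) * (Real.exp a * g a - c / 2 * Real.exp (2 * a - a))
            + c / 2 * Real.exp (t - a) := by rw [hra]; ring
      _ ≤ Real.exp (-t) * (Real.exp t * g t - c / 2 * Real.exp (2 * t - a))
            + c / 2 * Real.exp (t - a) := by linarith
      _ = (Real.exp (-t) * Real.exp t) * g t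
            - c / 2 * (Real.exp (-t) * Real.exp (2 * t - a)) + c / 2 * Real.exp (t - a) := by ring
      _ = g t := by rw [e1, e2]; ring
  -- choose t large and contradict the bound
  set B : ℝ := max 1 (2 / c * (M + |r a| * Real.exp (-a) + 1)) with hB
  have hB1 : (1:ℝ) ≤ B := le_max_left _ _
  have hBpos : 0 < B := lt_of_lt_of_le one_pos hB1
  set t : ℝ := a + Real.log B with htdef
  have hta : a ≤ t := by
    have := Real.log_nonneg hB1
    simp [htdef]; linarith
  have heB : Real.exp (t - a) = B := by
    simp [htdef, Real.exp_log hBpos]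
  have h1 := hlow t hta
  rw [heB] at h1
  have h2 : -|r a| * Real.exp (-a) ≤ r a * Real.exp (-t) := by
    have hle : Real.exp (-t) ≤ Real.exp (-a) := Real.exp_le_exp.2 (by linarith)
    nlinarith [neg_abs_le (r a), Real.exp_pos (-t), abs_nonneg (r a)]
  have h3 : 2 / c * (M + |r a| * Real.exp (-a) + 1) ≤ B := le_max_right _ _
  have h4 : M + |r a| * Real.exp (-a) + 1 ≤ c / 2 * B := by
    have := mul_le_mul_of_nonneg_left h3 (by positivity : (0:ℝ) ≤ c / 2)
    calc M + |r a| * Real.exp (-a) + 1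
        = c / 2 * (2 / c * (M + |r a| * Real.exp (-a) + 1)) := by field_simp
      _ ≤ c / 2 * B := this
  have h5 := hbd t
  clear_value t B r c
  linarith

lemma lemB (g : ℝ → ℝ) (hg : Differentiable ℝ g) (hg' : Differentiable ℝ (deriv g))
    (M : ℝ) (hbd : ∀ t, g t ≤ M) (hode : ∀ t, g t ≤ deriv (deriv g) t) :
    ∀ t, g t ≤ 0 := by
  intro a
  by_contra h
  push_neg at h
  rcases le_or_gt 0 (deriv g a) with h' | h'
  · exact lemA g hg hg' M hbd hode a h h'
  · set G : ℝ → ℝ := fun t => g (-t) with hG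
    have hGdiff : Differentiable ℝ G := hg.comp differentiable_neg
    have hGd : deriv G = fun t => -deriv g (-t) := by
      funext t; exact deriv_comp_neg g t
    have hGd' : Differentiable ℝ (deriv G) := by
      rw [hGd]; exact ((hg'.comp differentiable_neg).neg)
    have hGdd : ∀ t, deriv (deriv G) t = deriv (deriv g) (-t) := by
      intro t
      rw [hGd]
      have h1 : deriv (fun t => -deriv g (-t)) t = -deriv (fun t => deriv g (-t)) t :=
        deriv.neg
      rw [h1, deriv_comp_neg (deriv g) t]
      ring
    apply lemA G hGdiff hGd' M (fun t => hbd (-t))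
      (fun t => by rw [hGdd]; exact hode (-t)) (-a)
    · simpa [hG] using h
    · rw [hGd]; simp; linarith

theorem stmt_11 (F : ℝ → ℂ) (hFcont : Continuous F)
    (C : ℝ) (hC : 0 ≤ C) (hFbd : ∀ t : ℝ, ‖F t‖ ≤ C)
    (f : ℝ → ℂ) (D : ℝ) (hfbd : ∀ t : ℝ, ‖f t‖ ≤ D)
    (hf : Differentiable ℝ f) (hf' : Differentiable ℝ (deriv f))
    (hode : ∀ t : ℝ, deriv (deriv f) t = f t - F t) :
    ∀ t : ℝ, ‖f t‖ ≤ C := by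
  intro t0
  by_contra hcon
  push_neg at hcon
  have hft0 : f t0 ≠ 0 := by
    intro h; rw [h] at hcon; simp at hcon; linarith
  have hnorm0 : (0:ℝ) < ‖f t0‖ := norm_pos_iff.2 hft0
  set c : ℂ := (starRingEnd ℂ) (f t0) / (‖f t0‖ : ℂ) with hcdef
  have hnc : ‖c‖ = 1 := by
    rw [hcdef, norm_div, RCLike.norm_conj, Complex.norm_real,
      Real.norm_of_nonneg hnorm0.le, div_self (ne_of_gt hnorm0)]
  have key : ∀ (h : ℝ → ℂ), Differentiable ℝ h → ∀ x : ℝ,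
      HasDerivAt (fun s => (c * h s).re) ((c * deriv h x).re) x := by
    intro h hh x
    have h1 : HasDerivAt h (deriv h x) x := (hh x).hasDerivAt
    have h2 : HasDerivAt (fun s => c * h s) (c * deriv h x) x := h1.const_mul c
    exact Complex.reCLM.hasFDerivAt.comp_hasDerivAt x h2
  set φ : ℝ → ℝ := fun s => (c * f s).re - C with hφ
  have hφdiff : Differentiable ℝ φ := fun x => ((key f hf x).sub_const C).differentiableAt
  have hφd : deriv φ = fun x => (c * deriv f x).re := by
    funext x; exact ((key f hf x).sub_const C).deriv
  have hφd' : Differentiable ℝ (deriv φ) := by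
    rw [hφd]; exact fun x => (key (deriv f) hf' x).differentiableAt
  have hφdd : ∀ x, deriv (deriv φ) x = (c * (f x - F x)).re := by
    intro x; rw [hφd]
    have := (key (deriv f) hf' x).deriv
    rw [this, hode x]
  have hboundφ : ∀ s, φ s ≤ D - C := by
    intro s
    have h1 : (c * f s).re ≤ ‖c * f s‖ := by
      exact Complex.re_le_norm _
    have h2 : ‖c * f s‖ = ‖f s‖ := by rw [norm_mul, hnc, one_mul]
    have := hfbd s
    simp only [hφ]
    linarith
  have hodeφ : ∀ s, φ s ≤ deriv (deriv φ) s := by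
    intro s
    rw [hφdd s]
    have h1 : (c * F s).re ≤ C := by
      have h2 : (c * F s).re ≤ ‖c * F s‖ := by
        exact Complex.re_le_norm _
      rw [norm_mul, hnc, one_mul] at h2
      exact le_trans h2 (hFbd s)
    have h3 : (c * (f s - F s)).re = (c * f s).re - (c * F s).re := by
      rw [mul_sub, Complex.sub_re]
    simp only [hφ, h3]
    linarith
  have hfinal := lemB φ hφdiff hφd' (D - C) hboundφ hodeφ t0
  have hφt0 : φ t0 = ‖f t0‖ - C := by
    have hcf : c * f t0 = ((‖f t0‖ : ℝ) : ℂ) := by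
      rw [hcdef]
      have hne : ((‖f t0‖ : ℝ) : ℂ) ≠ 0 := by
        simpa using ne_of_gt hnorm0
      field_simp
      rw [mul_comm ((starRingEnd ℂ) (f t0)) (f t0), Complex.mul_conj]
      norm_cast
      rw [Complex.normSq_eq_norm_sq]
    simp only [hφ, hcf, Complex.ofReal_re]
  rw [hφt0] at hfinal
  linarith
end
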